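/- Interpolation property of Gelfand numbers: let 0 < θ < 1, let X, Y, Y₀, Y₁ be Banach spaces with Y₀ ∩ Y₁ ⊆ Y, and suppose there is C > 0 with ‖y‖_Y ≤ C ‖y‖_{Y₀}^{1−θ} ‖y‖_{Y₁}^{θ} for all y ∈ Y₀ ∩ Y₁. If T is a bounded linear operator from X into Y₀, Y₁ and Y simultaneously, then c_{n+m−1}(T : X → Y) ≤ C · c_n(T : X → Y₀)^{1−θ} · c_m(T : X → Y₁)^{θ} for all n, m ∈ ℕ. -/
import Mathlib
set_option synthInstance.maxHeartbeats 1000000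
set_option maxHeartbeats 1000000


open Module

variable {X Y Y₀ Y₁ : Type*} [NormedAddCommGroup X] [NormedSpace ℝ X]
  [NormedAddCommGroup Y] [NormedSpace ℝ Y]
  [NormedAddCommGroup Y₀] [NormedSpace ℝ Y₀] [NormedAddCommGroup Y₁] [NormedSpace ℝ Y₁]

/-- The `n`-th Gelfand number of a bounded linear operator. -/
noncomputable def gelfand {E F : Type*} [NormedAddCommGroup E] [NormedSpace ℝ E]
    [NormedAddCommGroup F] [NormedSpace ℝ F] (n : ℕ) (T : E →L[ℝ] F) : ℝ :=
  sInf {r : ℝ | ∃ M : Submodule ℝ E, IsClosed (M : Set E) ∧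
    Module.Finite ℝ (E ⧸ M) ∧ Module.finrank ℝ (E ⧸ M) < n ∧
    r = ‖T.comp M.subtypeL‖}


section MyAux

variable {E F : Type*} [NormedAddCommGroup E] [NormedSpace ℝ E]
  [NormedAddCommGroup F] [NormedSpace ℝ F]

def gelfandSet (n : ℕ) (T : E →L[ℝ] F) : Set ℝ :=
  {r : ℝ | ∃ M : Submodule ℝ E, IsClosed (M : Set E) ∧
    Module.Finite ℝ (E ⧸ M) ∧ Module.finrank ℝ (E ⧸ M) < n ∧
    r = ‖T.comp M.subtypeL‖}

lemma gelfand_eq (n : ℕ) (T : E →L[ℝ] F) : gelfand n T = sInf (gelfandSet n T) := rfl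

lemma gelfandSet_nonneg (n : ℕ) (T : E →L[ℝ] F) : ∀ r ∈ gelfandSet n T, 0 ≤ r := by
  rintro r ⟨M, -, -, -, rfl⟩; exact norm_nonneg (T.comp M.subtypeL)

lemma gelfand_nonneg (n : ℕ) (T : E →L[ℝ] F) : 0 ≤ gelfand n T :=
  Real.sInf_nonneg (gelfandSet_nonneg n T)

lemma gelfand_le (n : ℕ) (T : E →L[ℝ] F) (M : Submodule ℝ E) (h1 : IsClosed (M : Set E))
    (h2 : Module.Finite ℝ (E ⧸ M)) (h3 : Module.finrank ℝ (E ⧸ M) < n) :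
    gelfand n T ≤ ‖T.comp M.subtypeL‖ :=
  csInf_le ⟨0, gelfandSet_nonneg n T⟩ ⟨M, h1, h2, h3, rfl⟩

lemma gelfand_exists_lt {n : ℕ} (hn : 1 ≤ n) (T : E →L[ℝ] F) {ε : ℝ} (hε : 0 < ε) :
    ∃ M : Submodule ℝ E, IsClosed (M : Set E) ∧ Module.Finite ℝ (E ⧸ M) ∧
      Module.finrank ℝ (E ⧸ M) < n ∧ ‖T.comp M.subtypeL‖ < gelfand n T + ε := by
  have hne : (gelfandSet n T).Nonempty := by
    refine ⟨‖T.comp (⊤ : Submodule ℝ E).subtypeL‖, ⊤, ?_, ?_, ?_, rfl⟩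
    · simpa using isClosed_univ
    · infer_instance
    · have : Module.finrank ℝ (E ⧸ (⊤ : Submodule ℝ E)) = 0 :=
        finrank_zero_of_subsingleton
      omega
  obtain ⟨a, ⟨M, h1, h2, h3, rfl⟩, hlt⟩ := Real.lt_sInf_add_pos hne hε
  exact ⟨M, h1, h2, h3, hlt⟩

end MyAux

section Aux2
variable {E : Type*} [NormedAddCommGroup E] [NormedSpace ℝ E]

lemma quotient_inf_finite (M₀ M₁ : Submodule ℝ E) [Module.Finite ℝ (E ⧸ M₀)]
    [Module.Finite ℝ (E ⧸ M₁)] :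
    Module.Finite ℝ (E ⧸ (M₀ ⊓ M₁)) ∧
      Module.finrank ℝ (E ⧸ (M₀ ⊓ M₁)) ≤
        Module.finrank ℝ (E ⧸ M₀) + Module.finrank ℝ (E ⧸ M₁) := by
  have hker : LinearMap.ker (M₀.mkQ.prod M₁.mkQ) = M₀ ⊓ M₁ := by
    rw [LinearMap.ker_prod, Submodule.ker_mkQ, Submodule.ker_mkQ]
  let f := (M₀ ⊓ M₁).liftQ (M₀.mkQ.prod M₁.mkQ) hker.ge
  have hf : Function.Injective f := by
    rw [← LinearMap.ker_eq_bot]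
    exact Submodule.ker_liftQ_eq_bot _ _ _ hker.le
  have hfin : Module.Finite ℝ (E ⧸ (M₀ ⊓ M₁)) := Module.Finite.of_injective f hf
  refine ⟨hfin, ?_⟩
  have h := LinearMap.finrank_le_finrank_of_injective hf
  rwa [Module.finrank_prod] at h

end Aux2

/-- Interpolation property of Gelfand numbers: `T`, `T₀`, `T₁` represent the same operator
viewed with target norms `Y`, `Y₀`, `Y₁`, and the `Y`-norm satisfies the multiplicative
interpolation inequality `‖Tx‖ ≤ C ‖T₀x‖^{1-θ} ‖T₁x‖^{θ}`. -/
theorem stmt7 [CompleteSpace X] [CompleteSpace Y] [CompleteSpace Y₀] [CompleteSpace Y₁]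
    (θ C : ℝ) (hθ₀ : 0 < θ) (hθ₁ : θ < 1) (hC : 0 < C)
    (T : X →L[ℝ] Y) (T₀ : X →L[ℝ] Y₀) (T₁ : X →L[ℝ] Y₁)
    (hinterp : ∀ x : X, ‖T x‖ ≤ C * ‖T₀ x‖ ^ (1 - θ) * ‖T₁ x‖ ^ θ)
    (n m : ℕ) (hn : 1 ≤ n) (hm : 1 ≤ m) :
    gelfand (n + m - 1) T ≤ C * gelfand n T₀ ^ (1 - θ) * gelfand m T₁ ^ θ := by
  set g₀ := gelfand n T₀ with hg₀
  set g₁ := gelfand m T₁ with hg₁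
  have hg₀0 : 0 ≤ g₀ := gelfand_nonneg n T₀
  have hg₁0 : 0 ≤ g₁ := gelfand_nonneg m T₁
  have key : ∀ ε > (0:ℝ), gelfand (n + m - 1) T ≤ C * (g₀ + ε) ^ (1 - θ) * (g₁ + ε) ^ θ := by
    intro ε hε
    obtain ⟨M₀, hc₀, hf₀, hr₀, hlt₀⟩ := gelfand_exists_lt hn T₀ hε
    obtain ⟨M₁, hc₁, hf₁, hr₁, hlt₁⟩ := gelfand_exists_lt hm T₁ hε
    have hfin := (quotient_inf_finite M₀ M₁).1
    have hrank : Module.finrank ℝ (X ⧸ (M₀ ⊓ M₁)) < n + m - 1 := by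
      have := (quotient_inf_finite M₀ M₁).2
      omega
    have hclosed : IsClosed ((M₀ ⊓ M₁ : Submodule ℝ X) : Set X) := by
      have : ((M₀ ⊓ M₁ : Submodule ℝ X) : Set X) = (M₀ : Set X) ∩ (M₁ : Set X) := rfl
      rw [this]; exact hc₀.inter hc₁
    have h1 : gelfand (n + m - 1) T ≤ ‖T.comp (M₀ ⊓ M₁).subtypeL‖ :=
      gelfand_le _ _ _ hclosed hfin hrank
    set a := ‖T₀.comp M₀.subtypeL‖ with ha
    set b := ‖T₁.comp M₁.subtypeL‖ with hb
    have ha0 : 0 ≤ a := by rw [ha]; exact norm_nonneg (T₀.comp M₀.subtypeL)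
    have hb0 : 0 ≤ b := by rw [hb]; exact norm_nonneg (T₁.comp M₁.subtypeL)
    have h2 : ‖T.comp (M₀ ⊓ M₁).subtypeL‖ ≤ C * a ^ (1 - θ) * b ^ θ := by
      apply ContinuousLinearMap.opNorm_le_bound
      · positivity
      intro x
      have hx0 : ‖T₀ (x : X)‖ ≤ a * ‖(x : X)‖ := by
        have h := (T₀.comp M₀.subtypeL).le_opNorm ⟨(x : X), x.2.1⟩
        simpa using h
      have hx1 : ‖T₁ (x : X)‖ ≤ b * ‖(x : X)‖ := by
        have h := (T₁.comp M₁.subtypeL).le_opNorm ⟨(x : X), x.2.2⟩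
        simpa using h
      have hxn : ‖x‖ = ‖(x : X)‖ := rfl
      have hpow : ‖(x : X)‖ ^ (1 - θ) * ‖(x : X)‖ ^ θ = ‖(x : X)‖ := by
        rw [← Real.rpow_add' (norm_nonneg _) (by norm_num)]
        norm_num
      calc ‖(T.comp (M₀ ⊓ M₁).subtypeL) x‖ = ‖T (x : X)‖ := rfl
        _ ≤ C * ‖T₀ (x : X)‖ ^ (1 - θ) * ‖T₁ (x : X)‖ ^ θ := hinterp _
        _ ≤ C * (a * ‖(x : X)‖) ^ (1 - θ) * (b * ‖(x : X)‖) ^ θ := by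
            gcongr <;> first | exact hx0 | exact hx1 | positivity | linarith
        _ = C * a ^ (1 - θ) * b ^ θ * ‖x‖ := by
            rw [Real.mul_rpow ha0 (norm_nonneg _), Real.mul_rpow hb0 (norm_nonneg _), hxn]
            calc C * (a ^ (1-θ) * ‖(x:X)‖ ^ (1-θ)) * (b ^ θ * ‖(x:X)‖ ^ θ)
                = C * a ^ (1-θ) * b ^ θ * (‖(x:X)‖ ^ (1-θ) * ‖(x:X)‖ ^ θ) := by ring
              _ = C * a ^ (1-θ) * b ^ θ * ‖(x:X)‖ := by rw [hpow]
    have h3 : C * a ^ (1 - θ) * b ^ θ ≤ C * (g₀ + ε) ^ (1 - θ) * (g₁ + ε) ^ θ := by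
      have e0 : a ^ (1 - θ) ≤ (g₀ + ε) ^ (1 - θ) :=
        Real.rpow_le_rpow ha0 hlt₀.le (by linarith)
      have e1 : b ^ θ ≤ (g₁ + ε) ^ θ := Real.rpow_le_rpow hb0 hlt₁.le hθ₀.le
      have h4 := mul_le_mul (mul_le_mul_of_nonneg_left e0 hC.le) e1
        (Real.rpow_nonneg hb0 θ) (by positivity)
      linarith
    linarith
  have hcont : Filter.Tendsto (fun ε : ℝ => C * (g₀ + ε) ^ (1 - θ) * (g₁ + ε) ^ θ)
      (nhdsWithin 0 (Set.Ioi 0)) (nhds (C * g₀ ^ (1 - θ) * g₁ ^ θ)) := by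
    have c0 : ContinuousAt (fun ε : ℝ => C * (g₀ + ε) ^ (1 - θ) * (g₁ + ε) ^ θ) 0 := by
      have h0 : ContinuousAt (fun ε : ℝ => (g₀ + ε) ^ (1 - θ)) 0 := by
        have := (Real.continuousAt_rpow_const (g₀ + 0) (1 - θ) (Or.inr (by linarith : (0:ℝ) ≤ 1 - θ)))
        exact this.comp (by fun_prop)
      have h1 : ContinuousAt (fun ε : ℝ => (g₁ + ε) ^ θ) 0 := by
        have := (Real.continuousAt_rpow_const (g₁ + 0) θ (Or.inr hθ₀.le))
        exact this.comp (by fun_prop)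
      exact ((continuousAt_const (y := C)).mul h0).mul h1
    have := c0.continuousWithinAt (s := Set.Ioi (0:ℝ))
    simpa using this.tendsto
  refine ge_of_tendsto hcont ?_
  filter_upwards [self_mem_nhdsWithin] with ε hε
  exact key ε hε
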